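/- Global symmetry of translationally invariant injective MPS: Let A be an injective MPS tensor on n ≥ 3 sites and U a unitary on ℂ^d such that U^{⊗n}|Ψ⟩ = |Ψ⟩ where |Ψ⟩ = ∑Tr(A^{i₁}⋯A^{i_n})|i₁…i_n⟩. Then there exist an invertible matrix Z and a scalar λ with λⁿ = 1 such that ∑_{i'} U_{i,i'} A^{i'} = λ Z⁻¹ A^{i} Z for all i. -/

import Mathlib

open Matrix

namespace MPS18

variable {d D : ℕ}

lemma trace_mul_basis (C : Matrix (Fin D) (Fin D) ℂ) (a b : Fin D) :
    (C * Matrix.single a b 1).trace = C b a := by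
  have h : ∀ k, (C * Matrix.single a b (1:ℂ)) k k = if k = b then C b a else 0 := by
    intro k
    by_cases h : k = b
    · subst h; simp
    · simp [h]
  simp [Matrix.trace, Matrix.diag, h]

lemma eq_of_trace_mul (C C' : Matrix (Fin D) (Fin D) ℂ)
    (h : ∀ M : Matrix (Fin D) (Fin D) ℂ, (C * M).trace = (C' * M).trace) : C = C' := by
  ext a b
  have := h (Matrix.single b a 1)
  rwa [trace_mul_basis, trace_mul_basis] at this

lemma ofFn_smul_prod : ∀ (m : ℕ) (c : Fin m → ℂ) (M : Fin m → Matrix (Fin D) (Fin D) ℂ),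
    (List.ofFn fun k => c k • M k).prod = (∏ k, c k) • (List.ofFn M).prod
  | 0, c, M => by simp
  | (m+1), c, M => by
    rw [List.ofFn_succ, List.ofFn_succ (f := M), List.prod_cons, List.prod_cons,
      ofFn_smul_prod m _ _, Fin.prod_univ_succ]
    rw [smul_mul_assoc, Matrix.mul_smul, smul_smul]

lemma ofFn_sum_prod : ∀ (m : ℕ) (g : Fin m → Fin d → Matrix (Fin D) (Fin D) ℂ),
    (List.ofFn fun k => ∑ i, g k i).prod
      = ∑ j : Fin m → Fin d, (List.ofFn fun k => g k (j k)).prod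
  | 0, g => by simp
  | (m+1), g => by
    rw [List.ofFn_succ, List.prod_cons, ofFn_sum_prod m (fun k => g k.succ),
      Finset.sum_mul_sum, ← Fintype.sum_prod_type']
    apply Fintype.sum_equiv (Fin.consEquiv fun _ => Fin d)
    intro p
    rw [List.ofFn_succ, List.prod_cons]
    simp [Fin.consEquiv]

/-- linear combination map -/
noncomputable def combo (A : Fin d → Matrix (Fin D) (Fin D) ℂ) : (Fin d → ℂ) →ₗ[ℂ] Matrix (Fin D) (Fin D) ℂ where
  toFun c := ∑ i, c i • A i
  map_add' c c' := by simp [add_smul, Finset.sum_add_distrib]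
  map_smul' t c := by simp [smul_smul, Finset.smul_sum]

@[simp] lemma combo_apply (A : Fin d → Matrix (Fin D) (Fin D) ℂ) (c : Fin d → ℂ) :
    combo A c = ∑ i, c i • A i := rfl

lemma combo_single (A : Fin d → Matrix (Fin D) (Fin D) ℂ) (i : Fin d) :
    combo A (Pi.single i 1) = A i := by
  rw [combo_apply]
  rw [Finset.sum_eq_single i (fun b _ hb => by simp [Pi.single_apply, hb]) (by simp)]
  simp

/-- injectivity of the tensor implies the matrices span everything -/
lemma span_top_of_inj (A : Fin d → Matrix (Fin D) (Fin D) ℂ)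
    (hA : Function.Injective fun X : Matrix (Fin D) (Fin D) ℂ =>
      fun i : Fin d => (A i * Xᵀ).trace) :
    Submodule.span ℂ (Set.range A) = ⊤ := by
  by_contra hne
  have hlt : Submodule.span ℂ (Set.range A) < ⊤ := lt_top_iff_ne_top.mpr hne
  obtain ⟨f, hf0, hfmap⟩ := Submodule.exists_dual_map_eq_bot_of_lt_top hlt inferInstance
  set X : Matrix (Fin D) (Fin D) ℂ :=
    Matrix.of (fun a b => f (Matrix.single a b (1:ℂ))) with hXdef
  have pair : ∀ M : Matrix (Fin D) (Fin D) ℂ, (M * Xᵀ).trace = ∑ a, ∑ b, M a b * X a b := by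
    intro M
    simp [Matrix.trace, Matrix.diag, Matrix.mul_apply, Matrix.transpose_apply]
  have hfX : ∀ M : Matrix (Fin D) (Fin D) ℂ, f M = (M * Xᵀ).trace := by
    intro M
    rw [pair M]
    conv_lhs => rw [Matrix.matrix_eq_sum_single M]
    rw [map_sum]
    refine Finset.sum_congr rfl fun a _ => ?_
    rw [map_sum]
    refine Finset.sum_congr rfl fun b _ => ?_
    have : Matrix.single a b (M a b) = (M a b) • Matrix.single a b (1:ℂ) := by
      simp
    rw [this, _root_.map_smul]
    simp [hXdef]
  have hX0 : X = 0 := by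
    apply hA
    funext i
    show (A i * Xᵀ).trace = (A i * (0:Matrix (Fin D) (Fin D) ℂ)ᵀ).trace
    rw [← hfX (A i)]
    have hmem : f (A i) ∈ (Submodule.span ℂ (Set.range A)).map f :=
      Submodule.mem_map_of_mem (Submodule.subset_span (Set.mem_range_self i))
    rw [hfmap] at hmem
    simp only [Submodule.mem_bot] at hmem
    rw [hmem]
    simp
  apply hf0
  ext M
  rw [hfX M, hX0]
  simp

/-- products of a spanning family span -/
lemma span_prod_top (B : Fin d → Matrix (Fin D) (Fin D) ℂ)
    (hB : Submodule.span ℂ (Set.range B) = ⊤) :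
    ∀ m : ℕ, Submodule.span ℂ (Set.range fun j : Fin (m+1) → Fin d =>
      (List.ofFn fun k => B (j k)).prod) = ⊤
  | 0 => by
    rw [eq_top_iff, ← hB]
    refine Submodule.span_le.mpr ?_
    rintro x ⟨i, rfl⟩
    refine Submodule.subset_span ⟨fun _ => i, ?_⟩
    simp
  | (m+1) => by
    have ih := span_prod_top B hB m
    rw [eq_top_iff]
    intro x _
    have hx : x ∈ Submodule.span ℂ (Set.range B) *
        Submodule.span ℂ (Set.range fun j : Fin (m+1) → Fin d =>
          (List.ofFn fun k => B (j k)).prod) := by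
      rw [hB, ih]
      have : x = x * 1 := by rw [mul_one]
      rw [this]
      exact Submodule.mul_mem_mul Submodule.mem_top Submodule.mem_top
    rw [Submodule.span_mul_span] at hx
    refine Submodule.span_le.mpr ?_ hx
    rintro z ⟨u, ⟨i, rfl⟩, v, ⟨j, rfl⟩, rfl⟩
    refine Submodule.subset_span ⟨Fin.cons i j, ?_⟩
    simp only []
    rw [List.ofFn_succ, List.prod_cons]
    simp [Fin.cons_zero, Fin.cons_succ]

end MPS18

open MPS18 in
/-- a global on-site unitary symmetry of a translationally invariant
injective MPS is implemented by an invertible gauge `Z` and an `n`-th root of unity. -/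
theorem global_symmetry_TI_injective_MPS (n d D : ℕ) (hn : 3 ≤ n)
    (A : Fin d → Matrix (Fin D) (Fin D) ℂ)
    (hA : Function.Injective fun X : Matrix (Fin D) (Fin D) ℂ =>
      fun i : Fin d => (A i * Xᵀ).trace)
    (U : Matrix (Fin d) (Fin d) ℂ) (hU : U ∈ Matrix.unitaryGroup (Fin d) ℂ)
    (hsym : ∀ i : Fin n → Fin d,
      (∑ j : Fin n → Fin d, (∏ k : Fin n, U (i k) (j k)) *
          ((List.ofFn fun k => A (j k)).prod).trace) =
        ((List.ofFn fun k => A (i k)).prod).trace) :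
    ∃ (Z W : Matrix (Fin D) (Fin D) ℂ) (lam : ℂ),
      Z * W = 1 ∧ W * Z = 1 ∧ lam ^ n = 1 ∧
      ∀ j : Fin d, (∑ i' : Fin d, U j i' • A i') = lam • (W * A j * Z) := by
  -- dispose of the trivial case D = 0
  rcases Nat.eq_zero_or_pos D with hD | hD
  · subst hD
    refine ⟨1, 1, 1, by simp, by simp, one_pow n, fun j => ?_⟩
    ext a b
    exact a.elim0
  obtain ⟨m, rfl⟩ : ∃ m, n = m + 3 := ⟨n - 3, by omega⟩
  set i0 : Fin D := ⟨0, hD⟩ with hi0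
  -- the transformed tensor
  set B : Fin d → Matrix (Fin D) (Fin D) ℂ := fun i => ∑ i', U i i' • A i' with hBdef
  -- trace identity for B-strings
  have trB : ∀ j : Fin (m+3) → Fin d,
      ((List.ofFn fun k => B (j k)).prod).trace
        = ((List.ofFn fun k => A (j k)).prod).trace := by
    intro j
    have expand : (List.ofFn fun k => B (j k)).prod
        = ∑ j' : Fin (m+3) → Fin d,
            (List.ofFn fun k => U (j k) (j' k) • A (j' k)).prod := by
      rw [← ofFn_sum_prod (m+3) (fun k i => U (j k) i • A i)]
    rw [expand, Matrix.trace_sum, ← hsym j]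
    refine Finset.sum_congr rfl fun j' _ => ?_
    rw [ofFn_smul_prod, Matrix.trace_smul, smul_eq_mul]
  -- spanning properties
  have hAspan : Submodule.span ℂ (Set.range A) = ⊤ := span_top_of_inj A hA
  have hUU : star U * U = 1 := hU.1
  have hABack : ∀ k, ∑ i, (starRingEnd ℂ) (U i k) • B i = A k := by
    intro k
    have step1 : ∀ i, (starRingEnd ℂ) (U i k) • B i
        = ∑ i', ((starRingEnd ℂ) (U i k) * U i i') • A i' := by
      intro i
      rw [hBdef]
      rw [Finset.smul_sum]
      exact Finset.sum_congr rfl fun i' _ => smul_smul _ _ _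
    simp only [step1]
    rw [Finset.sum_comm]
    have step2 : ∀ i', (∑ i, ((starRingEnd ℂ) (U i k) * U i i') • A i')
        = ((star U * U) k i') • A i' := by
      intro i'
      rw [← Finset.sum_smul]
      simp [Matrix.mul_apply, Matrix.star_apply]
    simp only [step2, hUU]
    simp only [Matrix.one_apply, ite_smul, one_smul, zero_smul]
    simp
  have hBspan : Submodule.span ℂ (Set.range B) = ⊤ := by
    rw [eq_top_iff, ← hAspan]
    refine Submodule.span_le.mpr ?_
    rintro x ⟨k, rfl⟩
    rw [← hABack k]
    exact Submodule.sum_mem _ fun i _ =>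
      Submodule.smul_mem _ _ (Submodule.subset_span (Set.mem_range_self i))
  -- surjectivity of combo A
  have hPAsurj : Function.Surjective (combo A) := by
    rw [← LinearMap.range_eq_top, eq_top_iff, ← hAspan]
    refine Submodule.span_le.mpr ?_
    rintro x ⟨i, rfl⟩
    exact ⟨Pi.single i 1, combo_single A i⟩
  obtain ⟨R, hR⟩ := (combo A).exists_rightInverse_of_surjective
    (LinearMap.range_eq_top.mpr hPAsurj)
  set Φ : Matrix (Fin D) (Fin D) ℂ →ₗ[ℂ] Matrix (Fin D) (Fin D) ℂ := (combo B) ∘ₗ R with hΦdef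
  -- kernel inclusion
  have hker : ∀ v : Fin d → ℂ, combo A v = 0 → combo B v = 0 := by
    intro v hv
    set C := combo B v with hC
    have hzero : ∀ j : Fin (m+2) → Fin d,
        (C * (List.ofFn fun k => B (j k)).prod).trace = 0 := by
      intro j
      have hCmul : C * (List.ofFn fun k => B (j k)).prod
          = ∑ i, v i • (B i * (List.ofFn fun k => B (j k)).prod) := by
        rw [hC, combo_apply, Finset.sum_mul]
        exact Finset.sum_congr rfl fun i _ => smul_mul_assoc _ _ _
      rw [hCmul, Matrix.trace_sum]
      have hterm : ∀ i, (v i • (B i * (List.ofFn fun k => B (j k)).prod)).trace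
          = v i * (A i * (List.ofFn fun k => A (j k)).prod).trace := by
        intro i
        rw [Matrix.trace_smul, smul_eq_mul]
        congr 1
        have h1 : B i * (List.ofFn fun k => B (j k)).prod
            = (List.ofFn fun k => B ((Fin.cons i j : Fin (m+3) → Fin d) k)).prod := by
          rw [List.ofFn_succ, List.prod_cons]
          simp
        have h2 : A i * (List.ofFn fun k => A (j k)).prod
            = (List.ofFn fun k => A ((Fin.cons i j : Fin (m+3) → Fin d) k)).prod := by
          rw [List.ofFn_succ, List.prod_cons]
          simp
        rw [h1, h2, trB]
      simp only [hterm]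
      have hsum : ∑ i, v i * (A i * (List.ofFn fun k => A (j k)).prod).trace
          = ((combo A v) * (List.ofFn fun k => A (j k)).prod).trace := by
        rw [combo_apply, Finset.sum_mul, Matrix.trace_sum]
        refine Finset.sum_congr rfl fun i _ => ?_
        rw [smul_mul_assoc, Matrix.trace_smul, smul_eq_mul]
      rw [hsum, hv, zero_mul]
      simp
    set f : Matrix (Fin D) (Fin D) ℂ →ₗ[ℂ] ℂ :=
      (Matrix.traceLinearMap (Fin D) ℂ ℂ) ∘ₗ (LinearMap.mulLeft ℂ C) with hf
    have hsp : Submodule.span ℂ (Set.range fun j : Fin (m+2) → Fin d =>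
        (List.ofFn fun k => B (j k)).prod) ≤ LinearMap.ker f := by
      rw [Submodule.span_le]
      rintro x ⟨j, rfl⟩
      exact LinearMap.mem_ker.mpr (by simpa [hf] using hzero j)
    rw [span_prod_top B hBspan (m+1)] at hsp
    apply eq_of_trace_mul C 0
    intro M
    have hfM : f M = 0 := LinearMap.mem_ker.mp (hsp Submodule.mem_top)
    simp only [hf, LinearMap.comp_apply, LinearMap.mulLeft_apply,
      Matrix.traceLinearMap_apply] at hfM
    simpa using hfM
  have ΦPA : ∀ v, Φ (combo A v) = combo B v := by
    intro v
    have h1 : combo A (R (combo A v) - v) = 0 := by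
      rw [map_sub, ← LinearMap.comp_apply, hR]
      simp
    have h2 := hker _ h1
    rw [map_sub, sub_eq_zero] at h2
    exact h2
  have ΦA : ∀ i, Φ (A i) = B i := by
    intro i
    rw [← combo_single A i, ΦPA, combo_single]
  have Φsurj : Function.Surjective Φ := by
    have hr : LinearMap.range Φ = ⊤ := by
      rw [eq_top_iff, ← hBspan]
      refine Submodule.span_le.mpr ?_
      rintro x ⟨i, rfl⟩
      exact ⟨A i, ΦA i⟩
    exact LinearMap.range_eq_top.mp hr
  -- the key trace-preservation identity
  have key : ∀ g : Fin (m+3) → Matrix (Fin D) (Fin D) ℂ,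
      ((List.ofFn fun k => Φ (g k)).prod).trace = ((List.ofFn g).prod).trace := by
    intro g
    choose c hc using fun k => hPAsurj (g k)
    have e1 : (List.ofFn fun k => Φ (g k)).prod
        = ∑ j : Fin (m+3) → Fin d, (List.ofFn fun k => c k (j k) • B (j k)).prod := by
      have hfun : (fun k => Φ (g k)) = fun k => ∑ i, c k i • B i := by
        funext k
        rw [← hc k, ΦPA, combo_apply]
      rw [hfun, ofFn_sum_prod (m+3) (fun k i => c k i • B i)]
    have e2 : (List.ofFn g).prod
        = ∑ j : Fin (m+3) → Fin d, (List.ofFn fun k => c k (j k) • A (j k)).prod := by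
      have hfun : g = fun k => ∑ i, c k i • A i := by
        funext k
        rw [← hc k, combo_apply]
      conv_lhs => rw [hfun]
      rw [ofFn_sum_prod (m+3) (fun k i => c k i • A i)]
    rw [e1, e2, Matrix.trace_sum, Matrix.trace_sum]
    refine Finset.sum_congr rfl fun j _ => ?_
    rw [ofFn_smul_prod, ofFn_smul_prod, Matrix.trace_smul, Matrix.trace_smul, trB j]
  -- a preimage of the identity
  obtain ⟨J, hJ⟩ := Φsurj 1
  -- three-slot trace identity
  have tr3 : ∀ X Y Z : Matrix (Fin D) (Fin D) ℂ,
      (Φ X * (Φ Y * Φ Z)).trace = (X * (Y * (Z * J ^ m))).trace := by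
    intro X Y Z
    have h := key (Fin.cons X (Fin.cons Y (Fin.cons Z fun _ => J)))
    simp only [List.ofFn_succ, Fin.cons_zero, Fin.cons_succ, List.prod_cons,
      List.ofFn_const, List.prod_replicate, hJ, one_pow, mul_one] at h
    exact h
  -- multiplicativity up to Φ 1
  have mult : ∀ X Y : Matrix (Fin D) (Fin D) ℂ, Φ X * Φ Y = Φ (X * Y) * Φ 1 := by
    intro X Y
    apply eq_of_trace_mul
    intro M
    obtain ⟨Z, hZ⟩ := Φsurj M
    have h1 := tr3 X Y Z
    have h2 := tr3 (X * Y) 1 Z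
    rw [hZ] at h1 h2
    rw [mul_assoc, h1, mul_assoc, h2]
    congr 1
    simp only [one_mul, mul_assoc]
  have central : ∀ X : Matrix (Fin D) (Fin D) ℂ, Φ X * Φ 1 = Φ 1 * Φ X := by
    intro X
    apply eq_of_trace_mul
    intro M
    obtain ⟨Z, hZ⟩ := Φsurj M
    have h1 := tr3 X 1 Z
    have h2 := tr3 1 X Z
    rw [hZ] at h1 h2
    rw [mul_assoc, h1, mul_assoc, h2]
    congr 1
    simp only [one_mul]
  -- Φ 1 is a scalar
  have hcomm : ∀ M : Matrix (Fin D) (Fin D) ℂ, M * Φ 1 = Φ 1 * M := by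
    intro M
    obtain ⟨X, hX⟩ := Φsurj M
    rw [← hX, central]
  obtain ⟨μ, hμ⟩ : Φ (1 : Matrix (Fin D) (Fin D) ℂ) ∈
      Set.range (Matrix.scalar (Fin D)) := by
    apply Matrix.mem_range_scalar_of_commute_single
    intro a b _
    exact hcomm (Matrix.single a b 1)
  have hE : Φ (1 : Matrix (Fin D) (Fin D) ℂ) = μ • (1 : Matrix (Fin D) (Fin D) ℂ) := by
    rw [← hμ, Matrix.scalar_apply]
    ext a b
    by_cases h : a = b
    · subst h; simp
    · simp [Matrix.diagonal_apply_ne _ h, Matrix.one_apply_ne h]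
  -- μ is an (m+3)-rd root of unity
  have hDne : (D : ℂ) ≠ 0 := Nat.cast_ne_zero.mpr (by omega)
  have hμn : μ ^ (m+3) = 1 := by
    have h := key (fun _ => (1 : Matrix (Fin D) (Fin D) ℂ))
    simp only [List.ofFn_const, List.prod_replicate, one_pow, hE] at h
    rw [smul_pow, one_pow, Matrix.trace_smul, Matrix.trace_one, smul_eq_mul, Fintype.card_fin] at h
    exact mul_right_cancel₀ hDne (h.trans (one_mul _).symm)
  have hμ0 : μ ≠ 0 := by
    intro h0
    rw [h0] at hμn
    simp at hμn
  -- clean multiplicativity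
  have Φmul : ∀ X Y : Matrix (Fin D) (Fin D) ℂ, Φ X * Φ Y = μ • Φ (X * Y) := by
    intro X Y
    rw [mult, hE, Matrix.mul_smul, mul_one]
  -- Φ of the basic idempotent is nonzero
  have hPne : Φ (Matrix.single i0 i0 (1:ℂ)) ≠ 0 := by
    intro h0
    have hall : ∀ a b : Fin D, Φ (Matrix.single a b (1:ℂ)) = 0 := by
      intro a b
      have h1 : Φ (Matrix.single a i0 (1:ℂ)) * Φ (Matrix.single i0 i0 (1:ℂ))
          * Φ (Matrix.single i0 b (1:ℂ))
          = (μ * μ) • Φ (Matrix.single a b (1:ℂ)) := by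
        rw [Φmul, Matrix.single_mul_single_same, mul_one, smul_mul_assoc, Φmul,
          Matrix.single_mul_single_same, mul_one, smul_smul]
      rw [h0, mul_zero, zero_mul] at h1
      exact ((smul_eq_zero.mp h1.symm).resolve_left (mul_ne_zero hμ0 hμ0))
    have h1' : (1 : Matrix (Fin D) (Fin D) ℂ) = 0 := by
      rw [← hJ]
      calc Φ J = Φ (∑ a, ∑ b, Matrix.single a b (J a b)) := by
            rw [← Matrix.matrix_eq_sum_single J]
        _ = 0 := by
            rw [map_sum]
            apply Finset.sum_eq_zero
            intro a _
            rw [map_sum]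
            apply Finset.sum_eq_zero
            intro b _
            rw [show Matrix.single a b (J a b)
                = (J a b) • Matrix.single a b (1:ℂ) by simp,
              _root_.map_smul, hall, smul_zero]
    have hcontra : (1 : Matrix (Fin D) (Fin D) ℂ) i0 i0 = 0 := by rw [h1']; rfl
    rw [Matrix.one_apply_eq] at hcontra
    exact one_ne_zero hcontra
  obtain ⟨r, cI, hrc⟩ : ∃ r c : Fin D, Φ (Matrix.single i0 i0 (1:ℂ)) r c ≠ 0 := by
    by_contra hcon
    push_neg at hcon
    exact hPne (by ext a b; simpa using hcon a b)
  -- the intertwiner S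
  set S : Matrix (Fin D) (Fin D) ℂ :=
    ∑ a, Φ (Matrix.single a i0 (1:ℂ)) * Matrix.single cI a (1:ℂ) with hSdef
  have hbasis : ∀ b k : Fin D, Φ (Matrix.single b k (1:ℂ)) * S
      = μ • (S * Matrix.single b k (1:ℂ)) := by
    intro b k
    have hL : Φ (Matrix.single b k (1:ℂ)) * S
        = μ • (Φ (Matrix.single b i0 (1:ℂ)) * Matrix.single cI k (1:ℂ)) := by
      rw [hSdef, Finset.mul_sum]
      rw [Finset.sum_eq_single k]
      · rw [← mul_assoc, Φmul, Matrix.single_mul_single_same, one_mul, smul_mul_assoc]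
      · intro a _ ha
        rw [← mul_assoc, Φmul, Matrix.single_mul_single_of_ne (h := Ne.symm ha),
          map_zero, smul_zero, zero_mul]
      · intro h; exact absurd (Finset.mem_univ k) h
    have hRR : S * Matrix.single b k (1:ℂ)
        = Φ (Matrix.single b i0 (1:ℂ)) * Matrix.single cI k (1:ℂ) := by
      rw [hSdef, Finset.sum_mul]
      rw [Finset.sum_eq_single b]
      · rw [mul_assoc, Matrix.single_mul_single_same, one_mul]
      · intro a _ ha
        rw [mul_assoc, Matrix.single_mul_single_of_ne (h := ha), mul_zero]
      · intro h; exact absurd (Finset.mem_univ b) h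
    rw [hL, hRR]
  have hscomm : ∀ X : Matrix (Fin D) (Fin D) ℂ, Φ X * S = μ • (S * X) := by
    intro X
    have hX := Matrix.matrix_eq_sum_single X
    calc Φ X * S = ∑ a, ∑ b, X a b • (Φ (Matrix.single a b (1:ℂ)) * S) := by
          conv_lhs => rw [hX]
          rw [map_sum, Finset.sum_mul]
          refine Finset.sum_congr rfl fun a _ => ?_
          rw [map_sum, Finset.sum_mul]
          refine Finset.sum_congr rfl fun b _ => ?_
          rw [show Matrix.single a b (X a b)
              = X a b • Matrix.single a b (1:ℂ) by simp,
            _root_.map_smul, smul_mul_assoc]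
      _ = μ • ∑ a, ∑ b, X a b • (S * Matrix.single a b (1:ℂ)) := by
          simp only [hbasis]
          rw [Finset.smul_sum]
          refine Finset.sum_congr rfl fun a _ => ?_
          rw [Finset.smul_sum]
          refine Finset.sum_congr rfl fun b _ => ?_
          rw [smul_comm]
      _ = μ • (S * X) := by
          congr 1
          conv_rhs => rw [hX]
          rw [Matrix.mul_sum]
          refine Finset.sum_congr rfl fun a _ => ?_
          rw [Matrix.mul_sum]
          refine Finset.sum_congr rfl fun b _ => ?_
          rw [show Matrix.single a b (X a b)
              = X a b • Matrix.single a b (1:ℂ) by simp, Matrix.mul_smul]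
  -- left multiplication by S is injective
  have hSV : ∀ V : Matrix (Fin D) (Fin D) ℂ, S * V = 0 → V = 0 := by
    intro V hV
    have hSe : ∀ k : Fin D, S * Matrix.single i0 k (1:ℂ)
        = Φ (Matrix.single i0 i0 (1:ℂ)) * Matrix.single cI k (1:ℂ) := by
      intro k
      rw [hSdef, Finset.sum_mul, Finset.sum_eq_single i0]
      · rw [mul_assoc, Matrix.single_mul_single_same, one_mul]
      · intro a _ ha
        rw [mul_assoc, Matrix.single_mul_single_of_ne (h := ha), mul_zero]
      · intro h; exact absurd (Finset.mem_univ i0) h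
    have hPkV : ∀ k : Fin D, Φ (Matrix.single i0 i0 (1:ℂ))
        * (Matrix.single cI k (1:ℂ) * V) = 0 := by
      intro k
      have h1 : Φ (Matrix.single i0 k (1:ℂ)) * (S * V) = 0 := by
        rw [hV, mul_zero]
      rw [← mul_assoc, hbasis, smul_mul_assoc, hSe] at h1
      have h2 := (smul_eq_zero.mp h1).resolve_left hμ0
      rwa [mul_assoc] at h2
    ext k b
    have hent : (Φ (Matrix.single i0 i0 (1:ℂ))
        * (Matrix.single cI k (1:ℂ) * V)) r b
        = Φ (Matrix.single i0 i0 (1:ℂ)) r cI * V k b := by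
      rw [Matrix.mul_apply, Finset.sum_eq_single cI]
      · rw [Matrix.single_mul_apply_same, one_mul]
      · intro l _ hl
        rw [Matrix.single_mul_apply_of_ne (h := hl), mul_zero]
      · intro h; exact absurd (Finset.mem_univ cI) h
    have : Φ (Matrix.single i0 i0 (1:ℂ)) r cI * V k b = 0 := by
      rw [← hent, hPkV k]
      rfl
    have := (mul_eq_zero.mp this).resolve_left hrc
    simpa using this
  have hmulinj : Function.Injective fun V : Matrix (Fin D) (Fin D) ℂ => S * V := by
    intro X Y h
    have h2 : S * (X - Y) = 0 := by
      rw [Matrix.mul_sub, sub_eq_zero]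
      exact h
    exact sub_eq_zero.mp (hSV _ h2)
  have hend : Function.Injective (LinearMap.mulLeft ℂ S) := fun X Y h => hmulinj h
  obtain ⟨T, hT⟩ := LinearMap.injective_iff_surjective.mp hend 1
  rw [LinearMap.mulLeft_apply] at hT
  have hTS : T * S = 1 := by
    apply hmulinj
    show S * (T * S) = S * 1
    rw [← mul_assoc, hT, one_mul, mul_one]
  have Φform : ∀ X, Φ X = μ • (S * X * T) := by
    intro X
    have h : Φ X * S * T = (μ • (S * X)) * T := by rw [hscomm X]
    rwa [mul_assoc, hT, mul_one, smul_mul_assoc] at h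
  refine ⟨T, S, μ, hTS, hT, hμn, ?_⟩
  intro j
  have h1 : B j = μ • (S * A j * T) := by rw [← ΦA j, Φform]
  calc (∑ i' : Fin d, U j i' • A i') = B j := rfl
    _ = μ • (S * A j * T) := h1
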